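/- Let ε > 0, let B : [0,T] × Ω → ℝ³ and W : [0,T] × Ω → ℝ³ be smooth, let u be a smooth vector field with u₃ = 0 on Σ ⊂ ∂Ω (Ω = 𝕋² × (-1,1), Σ = {x₃ = ±1}), and let D_t = ∂_t + u·∇. Then ∫_Ω ε² (B × D_t(B × W)) · W dx = -(1/2) d/dt ∫_Ω ε² |B × W|² dx + (1/2) ∫_Ω ε² (∇·u) |B × W|² dx. -/

import Mathlib

open MeasureTheory

noncomputable section

/-- Partial derivative `∂ᵢ f` of a scalar function on `ℝ³`. -/
def pd (i : Fin 3) (f : (Fin 3 → ℝ) → ℝ) (x : Fin 3 → ℝ) : ℝ :=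
  fderiv ℝ f x (Pi.single i 1)

/-- Divergence `∇·F` of a vector field on `ℝ³`. -/
def div3 (F : (Fin 3 → ℝ) → (Fin 3 → ℝ)) (x : Fin 3 → ℝ) : ℝ :=
  ∑ i, pd i (fun y => F y i) x

/-- A fundamental domain for `Ω = 𝕋² × (-1,1)`. -/
def Om : Set (Fin 3 → ℝ) :=
  {x | x 0 ∈ Set.Ioo (0:ℝ) 1 ∧ x 1 ∈ Set.Ioo (0:ℝ) 1 ∧ x 2 ∈ Set.Ioo (-1:ℝ) 1}

/-- Material derivative `D_t g = ∂ₜ g + u·∇g` of a time-dependent scalar. -/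
def Dtf (u : ℝ → (Fin 3 → ℝ) → (Fin 3 → ℝ)) (g : ℝ → (Fin 3 → ℝ) → ℝ)
    (t : ℝ) (x : Fin 3 → ℝ) : ℝ :=
  deriv (fun s => g s x) t + ∑ i, u t x i * pd i (g t) x

/-- Material derivative applied componentwise to a time-dependent vector field. -/
def DtV (u F : ℝ → (Fin 3 → ℝ) → (Fin 3 → ℝ)) (t : ℝ) (x : Fin 3 → ℝ) : Fin 3 → ℝ :=
  fun i => Dtf u (fun s y => F s y i) t x

namespace LorentzAux

def aa : Fin 3 → ℝ := fun i => if i = 2 then (-1:ℝ) else 0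
def bb : Fin 3 → ℝ := fun _ => (1:ℝ)

lemma aa_le_bb : aa ≤ bb := by
  intro i; fin_cases i <;> simp [aa, bb]

lemma Om_eq : Om = Set.pi Set.univ fun i => Set.Ioo (aa i) (bb i) := by
  ext x
  constructor
  · rintro ⟨h0, h1, h2⟩ i _
    fin_cases i <;> simpa [aa, bb]
  · intro h
    refine ⟨?_, ?_, ?_⟩
    · simpa [aa, bb] using h 0 (Set.mem_univ _)
    · simpa [aa, bb] using h 1 (Set.mem_univ _)
    · simpa [aa, bb] using h 2 (Set.mem_univ _)

lemma Om_subset_Icc : Om ⊆ Set.Icc aa bb := by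
  rw [Om_eq, ← Set.pi_univ_Icc]
  exact Set.pi_mono fun i _ => Set.Ioo_subset_Icc_self

lemma Om_meas : MeasurableSet Om := by
  rw [Om_eq]; exact MeasurableSet.univ_pi fun i => measurableSet_Ioo

lemma Om_ae_eq_Icc : Om =ᵐ[volume] Set.Icc aa bb := by
  rw [MeasureTheory.ae_eq_set]
  constructor
  · rw [Set.diff_eq_empty.2 Om_subset_Icc]; simp
  · have hOmvol : volume Om = ∏ i, ENNReal.ofReal (bb i - aa i) := by
      rw [Om_eq, volume_pi_pi]
      congr 1
      ext i
      rw [Real.volume_Ioo]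
    have hIccvol : volume (Set.Icc aa bb) = ∏ i, ENNReal.ofReal (bb i - aa i) :=
      Real.volume_Icc_pi
    have hfin : volume Om ≠ ⊤ := by
      rw [hOmvol]
      exact (ENNReal.prod_lt_top (fun i _ => ENNReal.ofReal_lt_top)).ne
    rw [measure_diff Om_subset_Icc Om_meas.nullMeasurableSet hfin, hIccvol, ← hOmvol]
    simp

lemma integrableOn_Om {f : (Fin 3 → ℝ) → ℝ} (hf : Continuous f) : IntegrableOn f Om :=
  (hf.continuousOn.integrableOn_compact isCompact_Icc).mono_set Om_subset_Icc

lemma contDiff_slice {h : ℝ × (Fin 3 → ℝ) → ℝ} (hh : ContDiff ℝ (⊤:ℕ∞) h) (t : ℝ) :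
    ContDiff ℝ (⊤:ℕ∞) (fun x => h (t, x)) :=
  hh.comp (contDiff_const.prodMk contDiff_id)

lemma hasDerivAt_slice {h : ℝ × (Fin 3 → ℝ) → ℝ} (hh : ContDiff ℝ (⊤:ℕ∞) h) (t : ℝ)
    (x : Fin 3 → ℝ) :
    HasDerivAt (fun s => h (s, x)) (fderiv ℝ h (t, x) (1, 0)) t := by
  have H : HasFDerivAt h (fderiv ℝ h (t, x)) (t, x) :=
    (hh.differentiable (by simp) (t, x)).hasFDerivAt
  have hg : HasDerivAt (fun s : ℝ => (s, x)) ((1 : ℝ), (0 : Fin 3 → ℝ)) t :=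
    (hasDerivAt_id t).prodMk (hasDerivAt_const t x)
  exact H.comp_hasDerivAt t hg

lemma pd_slice {h : ℝ × (Fin 3 → ℝ) → ℝ} (hh : ContDiff ℝ (⊤:ℕ∞) h) (t : ℝ)
    (x : Fin 3 → ℝ) (i : Fin 3) :
    pd i (fun y => h (t, y)) x = fderiv ℝ h (t, x) (0, Pi.single i 1) := by
  have H : HasFDerivAt h (fderiv ℝ h (t, x)) (t, x) :=
    (hh.differentiable (by simp) (t, x)).hasFDerivAt
  have hg : HasFDerivAt (fun y : Fin 3 → ℝ => ((t : ℝ), y))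
      ((0 : (Fin 3 → ℝ) →L[ℝ] ℝ).prod (ContinuousLinearMap.id ℝ (Fin 3 → ℝ))) x :=
    (hasFDerivAt_const t x).prodMk (hasFDerivAt_id x)
  have := H.comp x hg
  rw [pd, show (fun y => h (t, y)) = h ∘ Prod.mk t from rfl, this.fderiv]
  simp

lemma insertNth_per (i : Fin 2) (y : Fin 2 → ℝ) :
    (Fin.insertNth (i.castSucc) (1:ℝ) y : Fin 3 → ℝ)
      = (Fin.insertNth (i.castSucc) (0:ℝ) y : Fin 3 → ℝ) + Pi.single (i.castSucc) 1 := by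
  funext j
  rcases eq_or_ne j i.castSucc with rfl | hj
  · simp [Fin.insertNth_apply_same]
  · rcases Fin.exists_succAbove_eq hj with ⟨k, rfl⟩
    simp [Fin.insertNth_apply_succAbove, Pi.single_eq_of_ne (Fin.succAbove_ne _ k)]

lemma continuous_pd {ψ : (Fin 3 → ℝ) → ℝ} (hψ : ContDiff ℝ (⊤:ℕ∞) ψ) (i : Fin 3) :
    Continuous (pd i ψ) :=
  (hψ.continuous_fderiv (by simp)).clm_apply continuous_const

lemma divergence_zero (v : (Fin 3 → ℝ) → (Fin 3 → ℝ)) (φ : (Fin 3 → ℝ) → ℝ)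
    (hv : ContDiff ℝ (⊤:ℕ∞) v) (hφ : ContDiff ℝ (⊤:ℕ∞) φ)
    (hvper : ∀ (x : Fin 3 → ℝ) (i : Fin 2), v (x + Pi.single i.castSucc 1) = v x)
    (hφper : ∀ (x : Fin 3 → ℝ) (i : Fin 2), φ (x + Pi.single i.castSucc 1) = φ x)
    (hv3 : ∀ x : Fin 3 → ℝ, x 2 = 1 ∨ x 2 = -1 → v x 2 = 0) :
    ∫ x in Set.Icc aa bb,
      ((∑ i, pd i (fun y => v y i) x) * φ x + ∑ i, v x i * pd i φ x) = 0 := by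
  set F : (Fin 3 → ℝ) → (Fin 3 → ℝ) := fun x i => v x i * φ x with hF
  have hvi : ∀ i, ContDiff ℝ (⊤:ℕ∞) (fun y => v y i) := fun i => contDiff_pi.1 hv i
  have hFc : ContDiff ℝ (⊤:ℕ∞) F :=
    contDiff_pi.2 fun i => (hvi i).mul hφ
  have hdiv : ∀ x, (∑ i, fderiv ℝ F x (Pi.single i 1) i)
      = (∑ i, pd i (fun y => v y i) x) * φ x + ∑ i, v x i * pd i φ x := by
    intro x
    have hdi : ∀ i : Fin 3, DifferentiableAt ℝ (fun y => v y i * φ y) x := fun i =>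
      ((hvi i).differentiable (by simp) x).mul
        (hφ.differentiable (by simp) x)
    have hfp : fderiv ℝ F x = ContinuousLinearMap.pi
        (fun i => fderiv ℝ (fun y => v y i * φ y) x) := fderiv_pi hdi
    rw [hfp]
    simp only [ContinuousLinearMap.pi_apply]
    have : ∀ i : Fin 3, fderiv ℝ (fun y => v y i * φ y) x (Pi.single i 1)
        = v x i * pd i φ x + φ x * pd i (fun y => v y i) x := by
      intro i
      rw [fderiv_fun_mul ((hvi i).differentiable (by simp) x)
        (hφ.differentiable (by simp) x)]
      simp [pd]
    rw [Finset.sum_congr rfl fun i _ => this i, Finset.sum_add_distrib, Finset.sum_mul]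
    rw [add_comm]
    congr 1
    exact Finset.sum_congr rfl fun i _ => mul_comm _ _
  have Hc : ContinuousOn F (Set.Icc aa bb) :=
    (hFc.continuous (n := (⊤:ℕ∞))).continuousOn
  have Hd : ∀ x ∈ (Set.pi Set.univ fun i => Set.Ioo (aa i) (bb i)) \ (∅ : Set (Fin 3 → ℝ)),
      HasFDerivAt F (fderiv ℝ F x) x := fun x _ =>
    (hFc.differentiable (by simp) x).hasFDerivAt
  have Hi : IntegrableOn (fun x => ∑ i, fderiv ℝ F x (Pi.single i 1) i)
      (Set.Icc aa bb) := by
    have hcont : Continuous fun x => ∑ i, fderiv ℝ F x (Pi.single i 1) i := by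
      apply continuous_finset_sum
      intro i _
      exact (continuous_apply i).comp
        ((hFc.continuous_fderiv (by simp)).clm_apply continuous_const)
    exact hcont.continuousOn.integrableOn_compact isCompact_Icc
  have hle : aa ≤ bb := aa_le_bb
  have H := integral_divergence_of_hasFDerivAt_off_countable aa bb hle F
    (fun x => fderiv ℝ F x) ∅ Set.countable_empty Hc Hd Hi
  simp only [← hdiv]
  rw [H, Fin.sum_univ_three]
  have h0 : ∀ x : Fin 2 → ℝ,
      F (Fin.insertNth (0:Fin 3) (bb 0) x) 0 = F (Fin.insertNth (0:Fin 3) (aa 0) x) 0 := by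
    intro x
    rw [show bb 0 = (1:ℝ) from rfl, show aa 0 = (0:ℝ) from rfl]
    have hkey : (Fin.insertNth (0:Fin 3) (1:ℝ) x : Fin 3 → ℝ)
        = Fin.insertNth (0:Fin 3) (0:ℝ) x + Pi.single (0:Fin 3) 1 := insertNth_per 0 x
    rw [hkey]
    show v _ 0 * φ _ = v _ 0 * φ _
    have hv0 := hvper (Fin.insertNth (0:Fin 3) (0:ℝ) x) 0
    have hp0 := hφper (Fin.insertNth (0:Fin 3) (0:ℝ) x) 0
    rw [Fin.castSucc_zero] at hv0 hp0
    rw [hv0, hp0]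
  have h1 : ∀ x : Fin 2 → ℝ,
      F (Fin.insertNth (1:Fin 3) (bb 1) x) 1 = F (Fin.insertNth (1:Fin 3) (aa 1) x) 1 := by
    intro x
    rw [show bb 1 = (1:ℝ) from rfl, show aa 1 = (0:ℝ) from rfl]
    have hkey : (Fin.insertNth (1:Fin 3) (1:ℝ) x : Fin 3 → ℝ)
        = Fin.insertNth (1:Fin 3) (0:ℝ) x + Pi.single (1:Fin 3) 1 := insertNth_per 1 x
    rw [hkey]
    show v _ 1 * φ _ = v _ 1 * φ _
    have hv1 := hvper (Fin.insertNth (1:Fin 3) (0:ℝ) x) 1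
    have hp1 := hφper (Fin.insertNth (1:Fin 3) (0:ℝ) x) 1
    rw [Fin.castSucc_one] at hv1 hp1
    rw [hv1, hp1]
  have h2b : ∀ x : Fin 2 → ℝ, F (Fin.insertNth (2:Fin 3) (bb 2) x) 2 = 0 := by
    intro x
    have hz : (Fin.insertNth (2:Fin 3) (bb 2) x : Fin 3 → ℝ) 2 = 1 := by
      rw [Fin.insertNth_apply_same]; rfl
    show v _ 2 * φ _ = 0
    rw [hv3 _ (Or.inl hz), zero_mul]
  have h2a : ∀ x : Fin 2 → ℝ, F (Fin.insertNth (2:Fin 3) (aa 2) x) 2 = 0 := by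
    intro x
    have hz : (Fin.insertNth (2:Fin 3) (aa 2) x : Fin 3 → ℝ) 2 = -1 := by
      rw [Fin.insertNth_apply_same]; rfl
    show v _ 2 * φ _ = 0
    rw [hv3 _ (Or.inr hz), zero_mul]
  simp only [h0, h1, h2b, h2a, sub_self, integral_zero, add_zero, zero_add]

lemma fderiv_sum_sq {E : Type*} [NormedAddCommGroup E] [NormedSpace ℝ E]
    (c : ℝ) (Q : Fin 3 → E → ℝ) (q : E) (hQ : ∀ i, DifferentiableAt ℝ (Q i) q) (v : E) :
    fderiv ℝ (fun p => c * ∑ i, (Q i p) ^ 2) q v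
      = c * ∑ i, 2 * Q i q * fderiv ℝ (Q i) q v := by
  have hsq : ∀ i : Fin 3, HasFDerivAt (fun p => (Q i p) ^ 2)
      ((2 * Q i q) • fderiv ℝ (Q i) q) q := by
    intro i
    have h := (hQ i).hasFDerivAt
    have h2 := h.mul h
    have heq : (fun p => (Q i p) ^ 2) = fun p => Q i p * Q i p := by
      funext p; ring
    rw [heq]
    have hEq : (2 * Q i q) • fderiv ℝ (Q i) q
        = Q i q • fderiv ℝ (Q i) q + Q i q • fderiv ℝ (Q i) q := by
      rw [two_mul, add_smul]
    rw [hEq]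
    exact h2
  have hsum : HasFDerivAt (fun p => ∑ i : Fin 3, (Q i p) ^ 2)
      (∑ i : Fin 3, (2 * Q i q) • fderiv ℝ (Q i) q) q :=
    HasFDerivAt.fun_sum fun i _ => hsq i
  have hc := hsum.const_mul c
  rw [hc.fderiv]
  simp only [ContinuousLinearMap.coe_smul', Pi.smul_apply, ContinuousLinearMap.coe_sum',
    Finset.sum_apply, smul_eq_mul]

lemma key_alg (e2 : ℝ) (b w uu : Fin 3 → ℝ) (c : Fin 3 → ℝ) (d : Fin 3 → Fin 3 → ℝ) :
    e2 * dotProduct (crossProduct b (fun i => c i + ∑ j, uu j * d i j)) w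
      = (-(1:ℝ)/2) * (e2 * ∑ i, 2 * crossProduct b w i * c i)
        + (-(1:ℝ)/2) * ∑ j, uu j * (e2 * ∑ i, 2 * crossProduct b w i * d i j) := by
  simp only [cross_apply, dotProduct, Fin.sum_univ_three, Matrix.cons_val_zero,
    Matrix.cons_val_one, Matrix.head_cons, Matrix.cons_val_two, Matrix.tail_cons]
  ring

end LorentzAux

open LorentzAux in
set_option maxHeartbeats 2000000 in
/-- The hidden structure of the Lorentz force: for smooth `B, W` and a smooth
velocity `u` with `u₃ = 0` on `Σ = {x₃ = ±1}` (and `Ω = 𝕋² × (-1,1)`),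
`∫_Ω ε² (B × D_t(B × W))·W dx
  = -(1/2) d/dt ∫_Ω ε² |B × W|² dx + (1/2) ∫_Ω ε² (∇·u)|B × W|² dx`. -/
theorem lorentz_hidden_energy_structure
    (ε : ℝ) (hε : 0 < ε)
    (B W u : ℝ → (Fin 3 → ℝ) → (Fin 3 → ℝ))
    (hB : ContDiff ℝ (⊤ : ℕ∞) (fun q : ℝ × (Fin 3 → ℝ) => B q.1 q.2))
    (hW : ContDiff ℝ (⊤ : ℕ∞) (fun q : ℝ × (Fin 3 → ℝ) => W q.1 q.2))
    (hu : ContDiff ℝ (⊤ : ℕ∞) (fun q : ℝ × (Fin 3 → ℝ) => u q.1 q.2))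
    (hBper : ∀ (t : ℝ) (x : Fin 3 → ℝ) (i : Fin 2),
      B t (x + Pi.single i.castSucc 1) = B t x)
    (hWper : ∀ (t : ℝ) (x : Fin 3 → ℝ) (i : Fin 2),
      W t (x + Pi.single i.castSucc 1) = W t x)
    (huper : ∀ (t : ℝ) (x : Fin 3 → ℝ) (i : Fin 2),
      u t (x + Pi.single i.castSucc 1) = u t x)
    (hbc : ∀ (t : ℝ) (x : Fin 3 → ℝ), x 2 = 1 ∨ x 2 = -1 → u t x 2 = 0) :
    ∀ t : ℝ,
      HasDerivAt
        (fun s => ∫ x in Om, ε^2 * ∑ i, (crossProduct (B s x) (W s x) i)^2)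
        ((∫ x in Om, ε^2 * div3 (u t) x * ∑ i, (crossProduct (B t x) (W t x) i)^2)
          - 2 * ∫ x in Om, ε^2 * dotProduct
              (crossProduct (B t x)
                (DtV u (fun s y => crossProduct (B s y) (W s y)) t x)) (W t x)) t := by
  intro t
  have hBi : ∀ j : Fin 3, ContDiff ℝ (⊤:ℕ∞) (fun q : ℝ × (Fin 3 → ℝ) => B q.1 q.2 j) :=
    fun j => contDiff_pi.1 hB j
  have hWi : ∀ j : Fin 3, ContDiff ℝ (⊤:ℕ∞) (fun q : ℝ × (Fin 3 → ℝ) => W q.1 q.2 j) :=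
    fun j => contDiff_pi.1 hW j
  have hQc : ∀ i : Fin 3, ContDiff ℝ (⊤:ℕ∞) (fun q : ℝ × (Fin 3 → ℝ) => crossProduct (B q.1 q.2) (W q.1 q.2) i) := by
    intro i
    fin_cases i <;>
    · simp only [cross_apply, Matrix.cons_val_zero, Matrix.cons_val_one, Matrix.head_cons,
        Matrix.cons_val_two, Matrix.tail_cons]
      exact ((hBi _).mul (hWi _)).sub ((hBi _).mul (hWi _))
  have hg : ContDiff ℝ (⊤:ℕ∞) (fun q : ℝ × (Fin 3 → ℝ) => ε ^ 2 * ∑ i, (crossProduct (B q.1 q.2) (W q.1 q.2) i) ^ 2) :=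
    contDiff_const.mul (ContDiff.sum fun i _ => (hQc i).pow 2)
  have hGcont : Continuous (fun q : ℝ × (Fin 3 → ℝ) => fderiv ℝ (fun q : ℝ × (Fin 3 → ℝ) => ε ^ 2 * ∑ i, (crossProduct (B q.1 q.2) (W q.1 q.2) i) ^ 2) q ((1:ℝ), (0 : Fin 3 → ℝ))) :=
    (hg.continuous_fderiv (by simp)).clm_apply continuous_const
  obtain ⟨C, hC⟩ := ((isCompact_Icc (a := t - 1) (b := t + 1)).prod
      (isCompact_Icc (a := aa) (b := bb))).exists_bound_of_continuousOn hGcont.continuousOn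
  have hOmfin : volume Om < ⊤ :=
    lt_of_le_of_lt (measure_mono Om_subset_Icc) isCompact_Icc.measure_lt_top
  have hmeas : ∀ᶠ s in nhds t, AEStronglyMeasurable (fun x => (fun q : ℝ × (Fin 3 → ℝ) => ε ^ 2 * ∑ i, (crossProduct (B q.1 q.2) (W q.1 q.2) i) ^ 2) (s, x))
      (volume.restrict Om) :=
    Filter.Eventually.of_forall fun s => (contDiff_slice hg s).continuous.aestronglyMeasurable
  have hint : Integrable (fun x => (fun q : ℝ × (Fin 3 → ℝ) => ε ^ 2 * ∑ i, (crossProduct (B q.1 q.2) (W q.1 q.2) i) ^ 2) (t, x)) (volume.restrict Om) :=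
    integrableOn_Om (contDiff_slice hg t).continuous
  have hmeas' : AEStronglyMeasurable (fun x => fderiv ℝ (fun q : ℝ × (Fin 3 → ℝ) => ε ^ 2 * ∑ i, (crossProduct (B q.1 q.2) (W q.1 q.2) i) ^ 2) (t, x) ((1:ℝ), (0 : Fin 3 → ℝ)))
      (volume.restrict Om) :=
    (hGcont.comp (continuous_const.prodMk continuous_id)).aestronglyMeasurable
  have hbound : ∀ᵐ x ∂(volume.restrict Om), ∀ s ∈ Metric.ball t 1,
      ‖fderiv ℝ (fun q : ℝ × (Fin 3 → ℝ) => ε ^ 2 * ∑ i, (crossProduct (B q.1 q.2) (W q.1 q.2) i) ^ 2) (s, x) ((1:ℝ), (0 : Fin 3 → ℝ))‖ ≤ C := by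
    filter_upwards [ae_restrict_mem Om_meas] with x hx s hs
    refine hC (s, x) ⟨?_, Om_subset_Icc hx⟩
    have hd := Metric.mem_ball.1 hs
    rw [Real.dist_eq] at hd
    have h1 := abs_lt.1 hd
    exact Set.mem_Icc.2 ⟨by linarith [h1.1], by linarith [h1.2]⟩
  have hbint : Integrable (fun _ : Fin 3 → ℝ => C) (volume.restrict Om) := by
    exact integrableOn_const hOmfin.ne
  have hdiff : ∀ᵐ x ∂(volume.restrict Om), ∀ s ∈ Metric.ball t 1,
      HasDerivAt (fun s => (fun q : ℝ × (Fin 3 → ℝ) => ε ^ 2 * ∑ i, (crossProduct (B q.1 q.2) (W q.1 q.2) i) ^ 2) (s, x)) (fderiv ℝ (fun q : ℝ × (Fin 3 → ℝ) => ε ^ 2 * ∑ i, (crossProduct (B q.1 q.2) (W q.1 q.2) i) ^ 2) (s, x) ((1:ℝ), (0 : Fin 3 → ℝ))) s :=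
    Filter.Eventually.of_forall fun x s _ => hasDerivAt_slice hg s x
  have hDCT := (hasDerivAt_integral_of_dominated_loc_of_deriv_le (Metric.ball_mem_nhds t one_pos)
    hmeas hint hmeas' hbound hbint hdiff).2
  -- pointwise fderiv computations
  have hA : ∀ (x : Fin 3 → ℝ) (v : ℝ × (Fin 3 → ℝ)), fderiv ℝ (fun q : ℝ × (Fin 3 → ℝ) => ε ^ 2 * ∑ i, (crossProduct (B q.1 q.2) (W q.1 q.2) i) ^ 2) (t, x) v
      = ε ^ 2 * ∑ i, 2 * crossProduct (B t x) (W t x) i * fderiv ℝ (fun q : ℝ × (Fin 3 → ℝ) => crossProduct (B q.1 q.2) (W q.1 q.2) i) (t, x) v :=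
    fun x v => fderiv_sum_sq (ε^2)
      (fun i (q : ℝ × (Fin 3 → ℝ)) => crossProduct (B q.1 q.2) (W q.1 q.2) i) (t, x)
      (fun i => (hQc i).differentiable (by simp) (t, x)) v
  have hpd : ∀ (x : Fin 3 → ℝ) (j : Fin 3), pd j (fun y => ε ^ 2 * ∑ i, (crossProduct (B t y) (W t y) i) ^ 2) x
      = ε ^ 2 * ∑ i, 2 * crossProduct (B t x) (W t x) i
          * fderiv ℝ (fun q : ℝ × (Fin 3 → ℝ) => crossProduct (B q.1 q.2) (W q.1 q.2) i) (t, x) ((0:ℝ), Pi.single j 1) :=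
    fun x j => (pd_slice hg t x j).trans (hA x _)
  have hDtv : ∀ x : Fin 3 → ℝ, DtV u (fun s y => crossProduct (B s y) (W s y)) t x
      = fun i => fderiv ℝ (fun q : ℝ × (Fin 3 → ℝ) => crossProduct (B q.1 q.2) (W q.1 q.2) i) (t, x) ((1:ℝ), (0 : Fin 3 → ℝ))
          + ∑ j, u t x j * fderiv ℝ (fun q : ℝ × (Fin 3 → ℝ) => crossProduct (B q.1 q.2) (W q.1 q.2) i) (t, x) ((0:ℝ), Pi.single j 1) := by
    intro x
    funext i
    show deriv (fun s => crossProduct (B s x) (W s x) i) t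
        + ∑ j, u t x j * pd j (fun y => crossProduct (B t y) (W t y) i) x
      = fderiv ℝ (fun q : ℝ × (Fin 3 → ℝ) => crossProduct (B q.1 q.2) (W q.1 q.2) i) (t, x) ((1:ℝ), (0 : Fin 3 → ℝ))
          + ∑ j, u t x j * fderiv ℝ (fun q : ℝ × (Fin 3 → ℝ) => crossProduct (B q.1 q.2) (W q.1 q.2) i) (t, x) ((0:ℝ), Pi.single j 1)
    congr 1
    · exact (hasDerivAt_slice (hQc i) t x).deriv
    · exact Finset.sum_congr rfl fun j _ =>
        congrArg (fun z => u t x j * z) (pd_slice (hQc i) t x j)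
  have claim1 : ∀ x : Fin 3 → ℝ, ε^2 * dotProduct (crossProduct (B t x) (DtV u (fun s y => crossProduct (B s y) (W s y)) t x)) (W t x)
      = (-(1:ℝ)/2) * fderiv ℝ (fun q : ℝ × (Fin 3 → ℝ) => ε ^ 2 * ∑ i, (crossProduct (B q.1 q.2) (W q.1 q.2) i) ^ 2) (t, x) ((1:ℝ), (0 : Fin 3 → ℝ)) + (-(1:ℝ)/2) * (∑ j, u t x j * pd j (fun y => ε ^ 2 * ∑ i, (crossProduct (B t y) (W t y) i) ^ 2) x) := by
    intro x
    rw [hDtv x, hA x ((1:ℝ), (0 : Fin 3 → ℝ)),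
      Finset.sum_congr rfl fun j (_ : j ∈ Finset.univ) =>
        congrArg (fun z => u t x j * z) (hpd x j)]
    exact key_alg (ε^2) (B t x) (W t x) (u t x)
      (fun i => fderiv ℝ (fun q : ℝ × (Fin 3 → ℝ) => crossProduct (B q.1 q.2) (W q.1 q.2) i) (t, x) ((1:ℝ), (0 : Fin 3 → ℝ)))
      (fun i j => fderiv ℝ (fun q : ℝ × (Fin 3 → ℝ) => crossProduct (B q.1 q.2) (W q.1 q.2) i) (t, x) ((0:ℝ), Pi.single j 1))
  -- continuity and integrability
  have hu_slice : ContDiff ℝ (⊤:ℕ∞) (fun x => u t x) :=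
    hu.comp (contDiff_const.prodMk contDiff_id)
  have hQslice : ∀ i : Fin 3, Continuous (fun x => crossProduct (B t x) (W t x) i) :=
    fun i => (contDiff_slice (hQc i) t).continuous
  have hcontsum : Continuous (fun x => ∑ i, (crossProduct (B t x) (W t x) i)^2) :=
    continuous_finset_sum _ fun i _ => (hQslice i).pow 2
  have hcontdiv : Continuous (fun x => div3 (u t) x) := by
    simp only [div3]
    exact continuous_finset_sum _ fun i _ => continuous_pd (contDiff_pi.1 hu_slice i) i
  have hAcont : Continuous (fun x => fderiv ℝ (fun q : ℝ × (Fin 3 → ℝ) => ε ^ 2 * ∑ i, (crossProduct (B q.1 q.2) (W q.1 q.2) i) ^ 2) (t, x) ((1:ℝ), (0 : Fin 3 → ℝ))) :=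
    hGcont.comp (continuous_const.prodMk continuous_id)
  have hScont : Continuous (fun x => ∑ j, u t x j * pd j (fun y => ε ^ 2 * ∑ i, (crossProduct (B t y) (W t y) i) ^ 2) x) :=
    continuous_finset_sum _ fun j _ =>
      ((continuous_apply j).comp hu_slice.continuous).mul
        (continuous_pd (contDiff_slice hg t) j)
  have hintA : IntegrableOn (fun x => fderiv ℝ (fun q : ℝ × (Fin 3 → ℝ) => ε ^ 2 * ∑ i, (crossProduct (B q.1 q.2) (W q.1 q.2) i) ^ 2) (t, x) ((1:ℝ), (0 : Fin 3 → ℝ))) Om := integrableOn_Om hAcont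
  have hintS : IntegrableOn (fun x => ∑ j, u t x j * pd j (fun y => ε ^ 2 * ∑ i, (crossProduct (B t y) (W t y) i) ^ 2) x) Om := integrableOn_Om hScont
  have hintD : IntegrableOn
      (fun x => ε^2 * div3 (u t) x * ∑ i, (crossProduct (B t x) (W t x) i)^2) Om :=
    integrableOn_Om ((continuous_const.mul hcontdiv).mul hcontsum)
  -- divergence theorem
  have hphiper : ∀ (x : Fin 3 → ℝ) (i : Fin 2),
      (fun y => ε ^ 2 * ∑ i, (crossProduct (B t y) (W t y) i) ^ 2) (x + Pi.single i.castSucc 1) = (fun y => ε ^ 2 * ∑ i, (crossProduct (B t y) (W t y) i) ^ 2) x := by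
    intro x i
    simp only [hBper, hWper]
  have hdiv0 : ∫ x in Om, ((∑ i, pd i (fun y => u t y i) x)
        * (ε ^ 2 * ∑ i, (crossProduct (B t x) (W t x) i) ^ 2) + ∑ j, u t x j * pd j (fun y => ε ^ 2 * ∑ i, (crossProduct (B t y) (W t y) i) ^ 2) x) = 0 := by
    rw [setIntegral_congr_set Om_ae_eq_Icc]
    exact divergence_zero (u t) (fun y => ε ^ 2 * ∑ i, (crossProduct (B t y) (W t y) i) ^ 2) hu_slice (contDiff_slice hg t)
      (fun x i => huper t x i) hphiper (hbc t)
  have hfeq : (fun x => ε^2 * div3 (u t) x * ∑ i, (crossProduct (B t x) (W t x) i)^2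
        + ∑ j, u t x j * pd j (fun y => ε ^ 2 * ∑ i, (crossProduct (B t y) (W t y) i) ^ 2) x)
      = fun x => (∑ i, pd i (fun y => u t y i) x)
        * (ε ^ 2 * ∑ i, (crossProduct (B t x) (W t x) i) ^ 2) + ∑ j, u t x j * pd j (fun y => ε ^ 2 * ∑ i, (crossProduct (B t y) (W t y) i) ^ 2) x := by
    funext x
    simp only [div3]
    ring
  have e1 : (∫ x in Om, (ε^2 * div3 (u t) x * ∑ i, (crossProduct (B t x) (W t x) i)^2
      + ∑ j, u t x j * pd j (fun y => ε ^ 2 * ∑ i, (crossProduct (B t y) (W t y) i) ^ 2) x)) = 0 := by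
    rw [hfeq]
    exact hdiv0
  have e2 : (∫ x in Om, (ε^2 * div3 (u t) x * ∑ i, (crossProduct (B t x) (W t x) i)^2
        + ∑ j, u t x j * pd j (fun y => ε ^ 2 * ∑ i, (crossProduct (B t y) (W t y) i) ^ 2) x))
      = (∫ x in Om, ε^2 * div3 (u t) x * ∑ i, (crossProduct (B t x) (W t x) i)^2) + ∫ x in Om, ∑ j, u t x j * pd j (fun y => ε ^ 2 * ∑ i, (crossProduct (B t y) (W t y) i) ^ 2) x := integral_add hintD hintS
  have e3 : (∫ x in Om, ε^2 * dotProduct (crossProduct (B t x) (DtV u (fun s y => crossProduct (B s y) (W s y)) t x)) (W t x))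
      = ∫ x in Om, ((-(1:ℝ)/2) * fderiv ℝ (fun q : ℝ × (Fin 3 → ℝ) => ε ^ 2 * ∑ i, (crossProduct (B q.1 q.2) (W q.1 q.2) i) ^ 2) (t, x) ((1:ℝ), (0 : Fin 3 → ℝ)) + (-(1:ℝ)/2) * (∑ j, u t x j * pd j (fun y => ε ^ 2 * ∑ i, (crossProduct (B t y) (W t y) i) ^ 2) x)) :=
    integral_congr_ae (Filter.Eventually.of_forall claim1)
  have e4 : (∫ x in Om, ((-(1:ℝ)/2) * fderiv ℝ (fun q : ℝ × (Fin 3 → ℝ) => ε ^ 2 * ∑ i, (crossProduct (B q.1 q.2) (W q.1 q.2) i) ^ 2) (t, x) ((1:ℝ), (0 : Fin 3 → ℝ)) + (-(1:ℝ)/2) * (∑ j, u t x j * pd j (fun y => ε ^ 2 * ∑ i, (crossProduct (B t y) (W t y) i) ^ 2) x)))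
      = (-(1:ℝ)/2) * (∫ x in Om, fderiv ℝ (fun q : ℝ × (Fin 3 → ℝ) => ε ^ 2 * ∑ i, (crossProduct (B q.1 q.2) (W q.1 q.2) i) ^ 2) (t, x) ((1:ℝ), (0 : Fin 3 → ℝ)))
        + (-(1:ℝ)/2) * ∫ x in Om, ∑ j, u t x j * pd j (fun y => ε ^ 2 * ∑ i, (crossProduct (B t y) (W t y) i) ^ 2) x := by
    rw [integral_add (hintA.const_mul _) (hintS.const_mul _), integral_const_mul,
      integral_const_mul]
  have hval : (∫ x in Om, fderiv ℝ (fun q : ℝ × (Fin 3 → ℝ) => ε ^ 2 * ∑ i, (crossProduct (B q.1 q.2) (W q.1 q.2) i) ^ 2) (t, x) ((1:ℝ), (0 : Fin 3 → ℝ))) = (∫ x in Om, ε^2 * div3 (u t) x * ∑ i, (crossProduct (B t x) (W t x) i)^2) - 2 * (∫ x in Om, ε^2 * dotProduct (crossProduct (B t x) (DtV u (fun s y => crossProduct (B s y) (W s y)) t x)) (W t x)) := by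
    rw [e3, e4]
    rw [e2] at e1
    linarith
  rw [hval] at hDCT
  exact hDCT

end
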